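/- Let I be a nonempty index set and let (R_i)_{i∈I} be a family of nontrivial additive subgroups of ℚ. If the product G = ∏_{i∈I} R_i is Krylov transitive, then G is fully transitive. -/

import Mathlib

/-- `n` divides `x` in the group `G`. -/
def Divides {G : Type*} [AddCommGroup G] (n : ℕ) (x : G) : Prop :=
  ∃ z : G, n • z = x

/-- `χ(x) ≤ χ(y)`: every prime-power dividing `x` divides `y`. -/
def HeightLE {G H : Type*} [AddCommGroup G] [AddCommGroup H] (x : G) (y : H) : Prop :=
  ∀ p k : ℕ, p.Prime → Divides (p ^ k) x → Divides (p ^ k) y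

/-- `χ(x) = χ(y)`. -/
def HeightEq {G H : Type*} [AddCommGroup G] [AddCommGroup H] (x : G) (y : H) : Prop :=
  HeightLE x y ∧ HeightLE y x

def FullyTransitive (G : Type*) [AddCommGroup G] : Prop :=
  ∀ x y : G, HeightLE x y → ∃ φ : G →+ G, φ x = y

def KrylovTransitive (G : Type*) [AddCommGroup G] : Prop :=
  ∀ x y : G, HeightEq x y → ∃ φ : G →+ G, φ x = y

def TransitiveGrp (G : Type*) [AddCommGroup G] : Prop :=
  ∀ x y : G, HeightEq x y → ∃ φ : G ≃+ G, φ x = y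

def WeaklyTransitive (G : Type*) [AddCommGroup G] : Prop :=
  ∀ (x y : G) (φ ψ : G →+ G), φ x = y → ψ y = x → ∃ η : G ≃+ G, η x = y

def IsTorsionFreeGrp (G : Type*) [AddCommGroup G] : Prop :=
  ∀ (n : ℤ) (x : G), n ≠ 0 → n • x = 0 → x = 0

/-- `τ(x) ≤ τ(y)`. -/
def TypeLE {G H : Type*} [AddCommGroup G] [AddCommGroup H] (x : G) (y : H) : Prop :=
  ∃ n : ℤ, n ≠ 0 ∧ HeightLE x (n • y)

/-- `τ(x) = τ(y)`. -/
def TypeEq {G H : Type*} [AddCommGroup G] [AddCommGroup H] (x : G) (y : H) : Prop :=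
  TypeLE x y ∧ TypeLE y x

def Homogeneous (G : Type*) [AddCommGroup G] : Prop :=
  ∀ x y : G, x ≠ 0 → y ≠ 0 → TypeEq x y

/-- `π(G)`: primes `p` with `pG ≠ G`. -/
def piSet (G : Type*) [AddCommGroup G] : Set ℕ :=
  {p | p.Prime ∧ ¬ ∀ x : G, ∃ z : G, p • z = x}

lemma divides_zsmul' {G : Type*} [AddCommGroup G] (n : ℕ) (m : ℤ) {z : G}
    (h : Divides n z) : Divides n (m • z) := by
  obtain ⟨w, hw⟩ := h
  exact ⟨m • w, by rw [smul_comm, hw]⟩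

lemma divides_add' {G : Type*} [AddCommGroup G] {n : ℕ} {a b : G}
    (ha : Divides n a) (hb : Divides n b) : Divides n (a + b) := by
  obtain ⟨za, hza⟩ := ha; obtain ⟨zb, hzb⟩ := hb
  exact ⟨za + zb, by rw [smul_add, hza, hzb]⟩

lemma divides_pi' {I : Type*} {G : I → Type*} [∀ i, AddCommGroup (G i)] (n : ℕ)
    (x : Π i, G i) : Divides n x ↔ ∀ i, Divides n (x i) := by
  constructor
  · rintro ⟨z, hz⟩ i
    exact ⟨z i, by rw [← hz]; rfl⟩
  · intro hi
    choose z hz using hi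
    exact ⟨z, funext fun i => hz i⟩

lemma key' (R : AddSubgroup ℚ) (a b : R) :
    ∃ (c : R) (ma mb : ℤ), ma • c = a ∧ mb • c = b ∧
      ∀ n : ℕ, Divides n a → Divides n b → Divides n c := by
  set A : ℚ := (a : ℚ) with hA
  set B : ℚ := (b : ℚ) with hB
  set α : ℤ := A.num * B.den with hα
  set β : ℤ := B.num * A.den with hβ
  set s : ℤ := Int.gcdA α β with hs
  set t : ℤ := Int.gcdB α β with ht
  obtain ⟨ma, hma⟩ : (Int.gcd α β : ℤ) ∣ α := Int.gcd_dvd_left α β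
  obtain ⟨mb, hmb⟩ : (Int.gcd α β : ℤ) ∣ β := Int.gcd_dvd_right α β
  have hg : (Int.gcd α β : ℤ) = α * s + β * t := Int.gcd_eq_gcd_ab α β
  have hAd : ((A.den : ℚ)) ≠ 0 := by exact_mod_cast A.den_ne_zero
  have hBd : ((B.den : ℚ)) ≠ 0 := by exact_mod_cast B.den_ne_zero
  have hD : ((A.den : ℚ)) * (B.den : ℚ) ≠ 0 := mul_ne_zero hAd hBd
  have h1 : A * A.den = A.num := Rat.mul_den_eq_num A
  have h2 : B * B.den = B.num := Rat.mul_den_eq_num B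
  have hg' : ((Int.gcd α β : ℤ) : ℚ) = (α : ℚ) * s + (β : ℚ) * t := by exact_mod_cast hg
  have hma' : (α : ℚ) = ((Int.gcd α β : ℤ) : ℚ) * ma := by exact_mod_cast hma
  have hmb' : (β : ℚ) = ((Int.gcd α β : ℤ) : ℚ) * mb := by exact_mod_cast hmb
  have hα' : (α : ℚ) = (A.num : ℚ) * B.den := by exact_mod_cast hα
  have hβ' : (β : ℚ) = (B.num : ℚ) * A.den := by exact_mod_cast hβ
  have hc : ((s : ℚ) * A + (t : ℚ) * B) * ((A.den : ℚ) * B.den) = ((Int.gcd α β : ℤ) : ℚ) := by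
    linear_combination (s : ℚ) * (B.den : ℚ) * h1 + (t : ℚ) * (A.den : ℚ) * h2
      - (s : ℚ) * hα' - (t : ℚ) * hβ' - hg'
  refine ⟨s • a + t • b, ma, mb, ?_, ?_, ?_⟩
  · apply Subtype.ext
    push_cast [zsmul_eq_mul]
    apply mul_right_cancel₀ hD
    calc (ma : ℚ) * ((s : ℚ) * A + (t : ℚ) * B) * ((A.den : ℚ) * B.den)
        = (ma : ℚ) * (((s : ℚ) * A + (t : ℚ) * B) * ((A.den : ℚ) * B.den)) := by ring
      _ = (ma : ℚ) * ((Int.gcd α β : ℤ) : ℚ) := by rw [hc]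
      _ = (α : ℚ) := by linear_combination -hma'
      _ = A * ((A.den : ℚ) * B.den) := by linear_combination hα' - (B.den : ℚ) * h1
  · apply Subtype.ext
    push_cast [zsmul_eq_mul]
    apply mul_right_cancel₀ hD
    calc (mb : ℚ) * ((s : ℚ) * A + (t : ℚ) * B) * ((A.den : ℚ) * B.den)
        = (mb : ℚ) * (((s : ℚ) * A + (t : ℚ) * B) * ((A.den : ℚ) * B.den)) := by ring
      _ = (mb : ℚ) * ((Int.gcd α β : ℤ) : ℚ) := by rw [hc]
      _ = (β : ℚ) := by linear_combination -hmb'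
      _ = B * ((A.den : ℚ) * B.den) := by linear_combination hβ' - (A.den : ℚ) * h2
  · intro n hda hdb
    exact divides_add' (divides_zsmul' n s hda) (divides_zsmul' n t hdb)

theorem stmt_11 (I : Type*) [Nonempty I] (R : I → AddSubgroup ℚ)
    (hnt : ∀ i, R i ≠ ⊥)
    (h : KrylovTransitive (Π i, R i)) : FullyTransitive (Π i, R i) := by
  intro x y hxy
  choose c ma mb hma hmb hdiv using fun i => key' (R i) (x i) (y i)
  have hxc : HeightEq x c := by
    constructor
    · intro p k hp hd
      have hdy := hxy p k hp hd
      rw [divides_pi'] at hd hdy ⊢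
      exact fun i => hdiv i _ (hd i) (hdy i)
    · intro p k hp hd
      rw [divides_pi'] at hd ⊢
      intro i
      rw [← hma i]
      exact divides_zsmul' _ _ (hd i)
  obtain ⟨φ, hφ⟩ := h x c hxc
  refine ⟨AddMonoidHom.comp ⟨⟨fun g i => mb i • g i, by funext i; simp⟩,
    fun g g' => by funext i; simp [smul_add]⟩ φ, ?_⟩
  simp only [AddMonoidHom.comp_apply, hφ]
  show (fun i => mb i • c i) = y
  exact funext hmb
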